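/- Let v : ℝ × ℝ → ℝ be smooth and define u = ∂_x v − v² (the Miura transformation). Then the KdV expression factors through the mKdV expression: ∂_t u + 6 u ∂_x u + ∂_x³ u = (−2v + ∂_x)( ∂_t v − 6 v² ∂_x v + ∂_x³ v ), i.e. u_t + 6uu_x + u_{xxx} = (v_t − 6v²v_x + v_{xxx})_x − 2v·(v_t − 6v²v_x + v_{xxx}). In particular, if v solves the mKdV equation v_t − 6v²v_x + v_{xxx} = 0, then u = v_x − v² solves the KdV equation u_t + 6uu_x + u_{xxx} = 0. -/

import Mathlib

/-- Partial derivative in the first (space) variable. -/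
noncomputable def dX (f : ℝ → ℝ → ℝ) (x t : ℝ) : ℝ := deriv (fun y => f y t) x

/-- Partial derivative in the second (time) variable. -/
noncomputable def dT (f : ℝ → ℝ → ℝ) (x t : ℝ) : ℝ := deriv (fun τ => f x τ) t

/-- Directional derivative of a function on the plane. -/
noncomputable def Dv (w : ℝ × ℝ) (f : ℝ × ℝ → ℝ) : ℝ × ℝ → ℝ := fun p => fderiv ℝ f p w

lemma smooth_Dv (w : ℝ × ℝ) {f : ℝ × ℝ → ℝ} (hf : ContDiff ℝ (⊤:ℕ∞) f) :
    ContDiff ℝ (⊤:ℕ∞) (Dv w f) :=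
  (hf.fderiv_right ((by norm_cast))).clm_apply contDiff_const

lemma dX_eq (f : ℝ → ℝ → ℝ) (hf : ContDiff ℝ (⊤:ℕ∞) (fun p : ℝ × ℝ => f p.1 p.2))
    (x t : ℝ) : dX f x t = Dv (1,0) (fun p : ℝ × ℝ => f p.1 p.2) (x,t) := by
  have h1 : HasFDerivAt (fun p : ℝ × ℝ => f p.1 p.2)
      (fderiv ℝ (fun p : ℝ × ℝ => f p.1 p.2) (x,t)) (x,t) :=
    ((hf.differentiable (by norm_cast)) (x,t)).hasFDerivAt
  have h2 : HasDerivAt (fun y : ℝ => ((y, t) : ℝ × ℝ)) ((1:ℝ), (0:ℝ)) x :=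
    (hasDerivAt_id x).prodMk (hasDerivAt_const x t)
  exact (h1.comp_hasDerivAt x h2).deriv

lemma dT_eq (f : ℝ → ℝ → ℝ) (hf : ContDiff ℝ (⊤:ℕ∞) (fun p : ℝ × ℝ => f p.1 p.2))
    (x t : ℝ) : dT f x t = Dv (0,1) (fun p : ℝ × ℝ => f p.1 p.2) (x,t) := by
  have h1 : HasFDerivAt (fun p : ℝ × ℝ => f p.1 p.2)
      (fderiv ℝ (fun p : ℝ × ℝ => f p.1 p.2) (x,t)) (x,t) :=
    ((hf.differentiable (by norm_cast)) (x,t)).hasFDerivAt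
  have h2 : HasDerivAt (fun τ : ℝ => ((x, τ) : ℝ × ℝ)) ((0:ℝ), (1:ℝ)) t :=
    (hasDerivAt_const t x).prodMk (hasDerivAt_id t)
  exact (h1.comp_hasDerivAt t h2).deriv

lemma Dv_comm {f : ℝ × ℝ → ℝ} (hf : ContDiff ℝ (⊤:ℕ∞) f) (w₁ w₂ : ℝ × ℝ) (p : ℝ × ℝ) :
    Dv w₁ (Dv w₂ f) p = Dv w₂ (Dv w₁ f) p := by
  have hdiff : Differentiable ℝ f := hf.differentiable (by norm_cast)
  have h1 : ∀ y, HasFDerivAt f (fderiv ℝ f y) y := fun y => (hdiff y).hasFDerivAt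
  have hf' : Differentiable ℝ (fderiv ℝ f) :=
    (hf.fderiv_right (m := ((⊤:ℕ∞) : WithTop ℕ∞)) (by norm_cast)).differentiable (by norm_cast)
  have h2 : HasFDerivAt (fderiv ℝ f) (fderiv ℝ (fderiv ℝ f) p) p := (hf' p).hasFDerivAt
  have key : ∀ w : ℝ × ℝ, HasFDerivAt (Dv w f)
      ((ContinuousLinearMap.apply ℝ ℝ w).comp (fderiv ℝ (fderiv ℝ f) p)) p := by
    intro w
    exact (ContinuousLinearMap.apply ℝ ℝ w).hasFDerivAt.comp p h2
  have e1 : Dv w₁ (Dv w₂ f) p = fderiv ℝ (fderiv ℝ f) p w₁ w₂ := by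
    have := (key w₂).fderiv
    simp only [Dv, this, ContinuousLinearMap.coe_comp', Function.comp_apply,
      ContinuousLinearMap.apply_apply]
  have e2 : Dv w₂ (Dv w₁ f) p = fderiv ℝ (fderiv ℝ f) p w₂ w₁ := by
    have := (key w₁).fderiv
    simp only [Dv, this, ContinuousLinearMap.coe_comp', Function.comp_apply,
      ContinuousLinearMap.apply_apply]
  rw [e1, e2, second_derivative_symmetric h1 h2 w₁ w₂]

lemma Dv_sub {f g : ℝ × ℝ → ℝ} (hf : Differentiable ℝ f) (hg : Differentiable ℝ g)
    (w p : ℝ × ℝ) : Dv w (fun q => f q - g q) p = Dv w f p - Dv w g p := by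
  simp [Dv, fderiv_fun_sub (hf p) (hg p)]

lemma Dv_add {f g : ℝ × ℝ → ℝ} (hf : Differentiable ℝ f) (hg : Differentiable ℝ g)
    (w p : ℝ × ℝ) : Dv w (fun q => f q + g q) p = Dv w f p + Dv w g p := by
  simp [Dv, fderiv_fun_add (hf p) (hg p)]

lemma Dv_mul {f g : ℝ × ℝ → ℝ} (hf : Differentiable ℝ f) (hg : Differentiable ℝ g)
    (w p : ℝ × ℝ) :
    Dv w (fun q => f q * g q) p = f p * Dv w g p + g p * Dv w f p := by
  simp only [Dv, fderiv_fun_mul (hf p) (hg p), ContinuousLinearMap.add_apply,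
    ContinuousLinearMap.smul_apply, smul_eq_mul]

lemma Dv_const_mul {f : ℝ × ℝ → ℝ} (hf : Differentiable ℝ f) (c : ℝ)
    (w p : ℝ × ℝ) : Dv w (fun q => c * f q) p = c * Dv w f p := by
  simp [Dv, fderiv_const_mul (hf p) c]

lemma Dv_sq {f : ℝ × ℝ → ℝ} (hf : Differentiable ℝ f)
    (w p : ℝ × ℝ) : Dv w (fun q => (f q) ^ 2) p = 2 * f p * Dv w f p := by
  have : (fun q => (f q) ^ 2) = fun q => f q * f q := by funext q; ring
  rw [this, Dv_mul hf hf]; ring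

/-- **Miura transformation.** For smooth `v(x,t)` and
`u = ∂ₓv - v²`, the KdV expression factors through the mKdV expression:
`uₜ + 6uuₓ + uₓₓₓ = (vₜ - 6v²vₓ + vₓₓₓ)ₓ - 2v (vₜ - 6v²vₓ + vₓₓₓ)`.
In particular, if `v` solves mKdV (`vₜ - 6v²vₓ + vₓₓₓ = 0`) then
`u = vₓ - v²` solves KdV (`uₜ + 6uuₓ + uₓₓₓ = 0`). -/
theorem miura_transformation
    (v u : ℝ → ℝ → ℝ)
    (hv : ContDiff ℝ (⊤:ℕ∞) (fun p : ℝ × ℝ => v p.1 p.2))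
    (hu : ∀ x t, u x t = dX v x t - (v x t) ^ 2) :
    (∀ x t, dT u x t + 6 * u x t * dX u x t + dX (fun y τ => dX (fun a b => dX u a b) y τ) x t
      = dX (fun y τ => dT v y τ - 6 * (v y τ) ^ 2 * dX v y τ
            + dX (fun a b => dX (fun e f => dX v e f) a b) y τ) x t
        - 2 * v x t * (dT v x t - 6 * (v x t) ^ 2 * dX v x t
            + dX (fun a b => dX (fun e f => dX v e f) a b) x t)) ∧
    ((∀ x t, dT v x t - 6 * (v x t) ^ 2 * dX v x t
        + dX (fun a b => dX (fun e f => dX v e f) a b) x t = 0) →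
      ∀ x t, dT u x t + 6 * u x t * dX u x t
        + dX (fun y τ => dX (fun a b => dX u a b) y τ) x t = 0) := by
  set e₁ : ℝ × ℝ := (1,0) with he₁
  set e₂ : ℝ × ℝ := (0,1) with he₂
  set V : ℝ × ℝ → ℝ := fun p => v p.1 p.2 with hV
  -- smoothness of iterated derivatives
  have sV1 : ContDiff ℝ (⊤:ℕ∞) (Dv e₁ V) := smooth_Dv e₁ hv
  have sV2 : ContDiff ℝ (⊤:ℕ∞) (Dv e₁ (Dv e₁ V)) := smooth_Dv e₁ sV1
  have sV3 : ContDiff ℝ (⊤:ℕ∞) (Dv e₁ (Dv e₁ (Dv e₁ V))) := smooth_Dv e₁ sV2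
  have sVt : ContDiff ℝ (⊤:ℕ∞) (Dv e₂ V) := smooth_Dv e₂ hv
  have dV : Differentiable ℝ V := hv.differentiable (by norm_cast)
  have dV1 : Differentiable ℝ (Dv e₁ V) := sV1.differentiable (by norm_cast)
  have dV2 : Differentiable ℝ (Dv e₁ (Dv e₁ V)) := sV2.differentiable (by norm_cast)
  have dV3 : Differentiable ℝ (Dv e₁ (Dv e₁ (Dv e₁ V))) := sV3.differentiable (by norm_cast)
  have dVt : Differentiable ℝ (Dv e₂ V) := sVt.differentiable (by norm_cast)
  -- dX v and dT v in terms of Dv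
  have hdXv : ∀ x t, dX v x t = Dv e₁ V (x,t) := fun x t => dX_eq v hv x t
  have hdTv : ∀ x t, dT v x t = Dv e₂ V (x,t) := fun x t => dT_eq v hv x t
  -- U : the Miura transform as a function on the plane
  set U : ℝ × ℝ → ℝ := fun p => Dv e₁ V p - (V p) ^ 2 with hUdef
  have sU : ContDiff ℝ (⊤:ℕ∞) U := sV1.sub (hv.pow 2)
  have dU : Differentiable ℝ U := sU.differentiable (by norm_cast)
  have hUe : ∀ x t, u x t = U (x,t) := by
    intro x t
    rw [hu x t, hdXv x t]
  -- dX u, dX² u, dX³ u, dT u in terms of Dv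
  have hdXu : ∀ x t, dX u x t = Dv e₁ U (x,t) := by
    intro x t
    have h : (fun a b => u a b) = fun a b => U (a,b) := by
      funext a b; exact hUe a b
    calc dX u x t = dX (fun a b => U (a,b)) x t := by rw [show u = fun a b => u a b from rfl, h]
      _ = Dv e₁ U (x,t) := dX_eq _ sU x t
  have sU1 : ContDiff ℝ (⊤:ℕ∞) (Dv e₁ U) := smooth_Dv e₁ sU
  have dU1 : Differentiable ℝ (Dv e₁ U) := sU1.differentiable (by norm_cast)
  have hdXXu : ∀ x t, dX (fun a b => dX u a b) x t = Dv e₁ (Dv e₁ U) (x,t) := by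
    intro x t
    have h : (fun a b => dX u a b) = fun a b => Dv e₁ U (a,b) := by
      funext a b; exact hdXu a b
    rw [h]; exact dX_eq _ sU1 x t
  have sU2 : ContDiff ℝ (⊤:ℕ∞) (Dv e₁ (Dv e₁ U)) := smooth_Dv e₁ sU1
  have hdXXXu : ∀ x t, dX (fun y τ => dX (fun a b => dX u a b) y τ) x t
      = Dv e₁ (Dv e₁ (Dv e₁ U)) (x,t) := by
    intro x t
    have h : (fun y τ => dX (fun a b => dX u a b) y τ) = fun y τ => Dv e₁ (Dv e₁ U) (y,τ) := by
      funext y τ; exact hdXXu y τ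
    rw [h]; exact dX_eq _ sU2 x t
  have hdTu : ∀ x t, dT u x t = Dv e₂ U (x,t) := by
    intro x t
    have h : (fun a b => u a b) = fun a b => U (a,b) := by
      funext a b; exact hUe a b
    calc dT u x t = dT (fun a b => U (a,b)) x t := by rw [show u = fun a b => u a b from rfl, h]
      _ = Dv e₂ U (x,t) := dT_eq _ sU x t
  -- dX³ v in terms of Dv
  have hdXXv : ∀ x t, dX (fun e f => dX v e f) x t = Dv e₁ (Dv e₁ V) (x,t) := by
    intro x t
    have h : (fun e f => dX v e f) = fun e f => Dv e₁ V (e,f) := by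
      funext a b; exact hdXv a b
    rw [h]; exact dX_eq _ sV1 x t
  have hdXXXv : ∀ x t, dX (fun a b => dX (fun e f => dX v e f) a b) x t
      = Dv e₁ (Dv e₁ (Dv e₁ V)) (x,t) := by
    intro x t
    have h : (fun a b => dX (fun e f => dX v e f) a b) = fun a b => Dv e₁ (Dv e₁ V) (a,b) := by
      funext a b; exact hdXXv a b
    rw [h]; exact dX_eq _ sV2 x t
  -- W : the mKdV expression as a function on the plane
  set W : ℝ × ℝ → ℝ := fun q => Dv e₂ V q - 6 * (V q) ^ 2 * Dv e₁ V q
      + Dv e₁ (Dv e₁ (Dv e₁ V)) q with hWdef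
  have d6V2 : Differentiable ℝ (fun q => 6 * (V q) ^ 2) :=
    (differentiable_const (6:ℝ)).mul (dV.pow 2)
  have dW1 : Differentiable ℝ (fun q => 6 * (V q) ^ 2 * Dv e₁ V q) := d6V2.mul dV1
  have sW : ContDiff ℝ (⊤:ℕ∞) W :=
    (sVt.sub ((contDiff_const.mul (hv.pow 2)).mul sV1)).add sV3
  have hWcurry : ∀ x t, (dT v x t - 6 * (v x t) ^ 2 * dX v x t
      + dX (fun a b => dX (fun e f => dX v e f) a b) x t) = W (x,t) := by
    intro x t
    rw [hdTv, hdXv, hdXXXv]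
  have hdXW : ∀ x t, dX (fun y τ => dT v y τ - 6 * (v y τ) ^ 2 * dX v y τ
      + dX (fun a b => dX (fun e f => dX v e f) a b) y τ) x t = Dv e₁ W (x,t) := by
    intro x t
    have h : (fun y τ => dT v y τ - 6 * (v y τ) ^ 2 * dX v y τ
        + dX (fun a b => dX (fun e f => dX v e f) a b) y τ) = fun y τ => W (y,τ) := by
      funext y τ; exact hWcurry y τ
    rw [h]; exact dX_eq _ sW x t
  -- pointwise expansions of derivatives of U
  have hU1 : ∀ p, Dv e₁ U p = Dv e₁ (Dv e₁ V) p - 2 * V p * Dv e₁ V p := by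
    intro p
    rw [show U = fun q => Dv e₁ V q - (V q)^2 from rfl, Dv_sub dV1 (dV.fun_pow 2), Dv_sq dV]
  have hU1fun : Dv e₁ U = fun q => Dv e₁ (Dv e₁ V) q - 2 * V q * Dv e₁ V q :=
    funext hU1
  have d2VV1 : Differentiable ℝ (fun q => 2 * V q * Dv e₁ V q) :=
    ((differentiable_const (2:ℝ)).mul dV).mul dV1
  have hU2 : ∀ p, Dv e₁ (Dv e₁ U) p
      = Dv e₁ (Dv e₁ (Dv e₁ V)) p - 2 * (Dv e₁ V p)^2 - 2 * V p * Dv e₁ (Dv e₁ V) p := by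
    intro p
    rw [hU1fun, Dv_sub dV2 d2VV1]
    have : Dv e₁ (fun q => 2 * V q * Dv e₁ V q) p
        = 2 * V p * Dv e₁ (Dv e₁ V) p + Dv e₁ V p * (2 * Dv e₁ V p) := by
      have := Dv_mul (f := fun q => 2 * V q) (g := Dv e₁ V)
        ((differentiable_const (2:ℝ)).mul dV) dV1 e₁ p
      rw [this, Dv_const_mul dV 2]
    rw [this]; ring
  have hU2fun : Dv e₁ (Dv e₁ U) = fun q =>
      Dv e₁ (Dv e₁ (Dv e₁ V)) q - 2 * (Dv e₁ V q)^2 - 2 * V q * Dv e₁ (Dv e₁ V) q :=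
    funext hU2
  have hU3 : ∀ p, Dv e₁ (Dv e₁ (Dv e₁ U)) p
      = Dv e₁ (Dv e₁ (Dv e₁ (Dv e₁ V))) p - 6 * Dv e₁ V p * Dv e₁ (Dv e₁ V) p
        - 2 * V p * Dv e₁ (Dv e₁ (Dv e₁ V)) p := by
    intro p
    rw [hU2fun]
    have d2V1sq : Differentiable ℝ (fun q => 2 * (Dv e₁ V q)^2) :=
      (differentiable_const (2:ℝ)).mul (dV1.pow 2)
    have d2VV2 : Differentiable ℝ (fun q => 2 * V q * Dv e₁ (Dv e₁ V) q) :=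
      ((differentiable_const (2:ℝ)).mul dV).mul dV2
    have h1 : Dv e₁ (fun q => (Dv e₁ (Dv e₁ (Dv e₁ V)) q - 2 * (Dv e₁ V q)^2)
        - 2 * V q * Dv e₁ (Dv e₁ V) q) p
        = Dv e₁ (fun q => Dv e₁ (Dv e₁ (Dv e₁ V)) q - 2 * (Dv e₁ V q)^2) p
          - Dv e₁ (fun q => 2 * V q * Dv e₁ (Dv e₁ V) q) p :=
      Dv_sub (dV3.sub d2V1sq) d2VV2 e₁ p
    have h2 : Dv e₁ (fun q => Dv e₁ (Dv e₁ (Dv e₁ V)) q - 2 * (Dv e₁ V q)^2) p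
        = Dv e₁ (Dv e₁ (Dv e₁ (Dv e₁ V))) p - 2 * (2 * Dv e₁ V p * Dv e₁ (Dv e₁ V) p) := by
      rw [Dv_sub dV3 d2V1sq, Dv_const_mul (dV1.fun_pow 2) 2, Dv_sq dV1]
    have h3 : Dv e₁ (fun q => 2 * V q * Dv e₁ (Dv e₁ V) q) p
        = 2 * V p * Dv e₁ (Dv e₁ (Dv e₁ V)) p + Dv e₁ (Dv e₁ V) p * (2 * Dv e₁ V p) := by
      have := Dv_mul (f := fun q => 2 * V q) (g := Dv e₁ (Dv e₁ V))
        ((differentiable_const (2:ℝ)).mul dV) dV2 e₁ p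
      rw [this, Dv_const_mul dV 2]
    rw [h1, h2, h3]; ring
  have hUt : ∀ p, Dv e₂ U p = Dv e₁ (Dv e₂ V) p - 2 * V p * Dv e₂ V p := by
    intro p
    rw [show U = fun q => Dv e₁ V q - (V q)^2 from rfl, Dv_sub dV1 (dV.fun_pow 2), Dv_sq dV,
      Dv_comm hv e₂ e₁ p]
  have hW1 : ∀ p, Dv e₁ W p = Dv e₁ (Dv e₂ V) p
      - (6 * (2 * V p * Dv e₁ V p) * Dv e₁ V p + 6 * (V p)^2 * Dv e₁ (Dv e₁ V) p)
      + Dv e₁ (Dv e₁ (Dv e₁ (Dv e₁ V))) p := by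
    intro p
    rw [show W = fun q => (Dv e₂ V q - 6 * (V q) ^ 2 * Dv e₁ V q)
      + Dv e₁ (Dv e₁ (Dv e₁ V)) q from rfl]
    rw [Dv_add (dVt.fun_sub dW1) dV3 e₁ p, Dv_sub dVt dW1 e₁ p]
    have h1 : Dv e₁ (fun q => 6 * (V q) ^ 2 * Dv e₁ V q) p
        = 6 * (V p)^2 * Dv e₁ (Dv e₁ V) p + Dv e₁ V p * (6 * (2 * V p * Dv e₁ V p)) := by
      have := Dv_mul (f := fun q => 6 * (V q)^2) (g := Dv e₁ V) d6V2 dV1 e₁ p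
      rw [this, Dv_const_mul (dV.fun_pow 2) 6, Dv_sq dV]
    rw [h1]; ring
  -- main identity
  have main : ∀ x t, dT u x t + 6 * u x t * dX u x t
      + dX (fun y τ => dX (fun a b => dX u a b) y τ) x t
      = dX (fun y τ => dT v y τ - 6 * (v y τ) ^ 2 * dX v y τ
            + dX (fun a b => dX (fun e f => dX v e f) a b) y τ) x t
        - 2 * v x t * (dT v x t - 6 * (v x t) ^ 2 * dX v x t
            + dX (fun a b => dX (fun e f => dX v e f) a b) x t) := by
    intro x t
    rw [hdTu, hdXu, hdXXXu, hdXW, hUe, hdTv, hdXv, hdXXXv]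
    rw [hUt (x,t), hU3 (x,t), hU1 (x,t), hW1 (x,t)]
    show Dv e₁ (Dv e₂ V) (x,t) - 2 * V (x,t) * Dv e₂ V (x,t)
        + 6 * U (x,t) * (Dv e₁ (Dv e₁ V) (x,t) - 2 * V (x,t) * Dv e₁ V (x,t)) + _ = _
    rw [show U (x,t) = Dv e₁ V (x,t) - (V (x,t))^2 from rfl]
    show _ = _ - 2 * V (x,t) * (Dv e₂ V (x,t) - 6 * (V (x,t))^2 * Dv e₁ V (x,t)
        + Dv e₁ (Dv e₁ (Dv e₁ V)) (x,t))
    ring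
  refine ⟨main, fun hmkdv x t => ?_⟩
  rw [main x t, hmkdv x t]
  have h0 : (fun y τ => dT v y τ - 6 * (v y τ) ^ 2 * dX v y τ
      + dX (fun a b => dX (fun e f => dX v e f) a b) y τ) = fun _ _ => (0:ℝ) := by
    funext y τ; exact hmkdv y τ
  rw [h0]
  simp [dX]
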